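/- Let (X, σ) be a minimal subshift and V ⊆ X a nonempty clopen set such that σ^i(V), −2 ≤ i ≤ 2, are pairwise disjoint. Let U ⊆ V be nonempty clopen, and set τ_V = f_{σ^{−1}(V)} f_{σ(V)}. Then τ_V f_U τ_V^{−1} = f_{σ(U)} and τ_V^{−1} f_U τ_V = f_{σ^{−1}(U)}. -/

import Mathlib

/-- The set of `n`-factors of a two-sided infinite word `w`. -/
def factorsZ {A : Type*} (w : ℤ → A) (n : ℕ) : Set (Fin n → A) :=
  {u | ∃ k : ℤ, ∀ i : Fin n, u i = w (k + (i : ℤ))}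

/-- The complexity function of a two-sided infinite word. -/
noncomputable def complexityZ {A : Type*} (w : ℤ → A) (n : ℕ) : ℕ :=
  Nat.card (factorsZ w n)

/-- `u` occurs in the length-`M` window of `w` starting at `k`. -/
def OccursIn {A : Type*} (w : ℤ → A) {n : ℕ} (u : Fin n → A) (k : ℤ) (M : ℕ) : Prop :=
  ∃ j : ℤ, k ≤ j ∧ j + (n : ℤ) ≤ k + (M : ℤ) ∧ ∀ i : Fin n, u i = w (j + (i : ℤ))

/-- `M` is a recurrence bound for length-`n` factors of `w`. -/
def IsRecurrenceBound {A : Type*} (w : ℤ → A) (n M : ℕ) : Prop :=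
  ∀ u ∈ factorsZ w n, ∀ k : ℤ, OccursIn w u k M

def UniformlyRecurrent {A : Type*} (w : ℤ → A) : Prop :=
  ∀ n : ℕ, ∃ M : ℕ, IsRecurrenceBound w n M

/-- The recurrence function of `w`. -/
noncomputable def recurrenceFn {A : Type*} (w : ℤ → A) (n : ℕ) : ℕ :=
  sInf {M | IsRecurrenceBound w n M}

def PeriodicWord {A : Type*} (w : ℤ → A) : Prop :=
  ∃ k : ℤ, 1 ≤ k ∧ ∀ i : ℤ, w (i + k) = w i

/-- The `i`-th power of the shift: `(shiftFun i y) t = y (t + i)`. -/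
def shiftFun {A : Type*} (i : ℤ) (y : ℤ → A) : ℤ → A := fun t => y (t + i)

/-- Image of a set of words under the `i`-th power of the shift. -/
def shiftSet {A : Type*} (i : ℤ) (W : Set (ℤ → A)) : Set (ℤ → A) := shiftFun i '' W
section Helpers

variable {A : Type*}

lemma shiftFun_comp (a b : ℤ) (p : ℤ → A) :
    shiftFun a (shiftFun b p) = shiftFun (a + b) p := by
  funext t; simp [shiftFun, add_assoc]

lemma shiftFun_zero' (p : ℤ → A) : shiftFun 0 p = p := by
  funext t; simp [shiftFun]

lemma shiftFun_inj (k : ℤ) : Function.Injective (shiftFun k : (ℤ → A) → (ℤ → A)) := by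
  intro p q h
  have := congrArg (shiftFun (-k)) h
  rwa [shiftFun_comp, shiftFun_comp, neg_add_cancel, shiftFun_zero', shiftFun_zero'] at this

lemma shiftSet_zero (W : Set (ℤ → A)) : shiftSet 0 W = W := by
  ext q
  constructor
  · rintro ⟨w, hw, rfl⟩; rwa [shiftFun_zero']
  · intro h; exact ⟨q, h, shiftFun_zero' q⟩

lemma shiftSet_shiftSet (i j : ℤ) (W : Set (ℤ → A)) :
    shiftSet i (shiftSet j W) = shiftSet (j + i) W := by
  ext q
  constructor
  · rintro ⟨r, ⟨w, hw, rfl⟩, rfl⟩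
    exact ⟨w, hw, by rw [shiftFun_comp, add_comm j i]⟩
  · rintro ⟨w, hw, rfl⟩
    exact ⟨shiftFun j w, ⟨w, hw, rfl⟩, by rw [shiftFun_comp, add_comm i j]⟩

lemma shift_mem' (k : ℤ) {W : Set (ℤ → A)} {q : ℤ → A} (h : q ∈ W) :
    shiftFun k q ∈ shiftSet k W := ⟨q, h, rfl⟩

lemma shift_mem {i : ℤ} (k j : ℤ) (hj : i + k = j) {W : Set (ℤ → A)} {q : ℤ → A}
    (h : q ∈ shiftSet i W) : shiftFun k q ∈ shiftSet j W := by
  rcases h with ⟨w, hw, rfl⟩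
  exact ⟨w, hw, by rw [shiftFun_comp, show k + i = j by omega]⟩

lemma shift_mem0 {i : ℤ} (k : ℤ) (hj : i + k = 0) {W : Set (ℤ → A)} {q : ℤ → A}
    (h : q ∈ shiftSet i W) : shiftFun k q ∈ W := by
  rcases h with ⟨w, hw, rfl⟩
  rw [shiftFun_comp, show k + i = 0 by omega, shiftFun_zero']
  exact hw

lemma mem_of_shift0 (k : ℤ) {W : Set (ℤ → A)} {q : ℤ → A}
    (h : shiftFun k q ∈ shiftSet k W) : q ∈ W := by
  rcases h with ⟨w, hw, he⟩
  have : w = q := shiftFun_inj k he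
  rwa [← this]

lemma mem_of_shift {i k j : ℤ} (hj : j + k = i) {W : Set (ℤ → A)} {q : ℤ → A}
    (h : shiftFun k q ∈ shiftSet i W) : q ∈ shiftSet j W := by
  rcases h with ⟨w, hw, he⟩
  refine ⟨w, hw, ?_⟩
  have h2 := congrArg (shiftFun (-k)) he
  rw [shiftFun_comp, shiftFun_comp, neg_add_cancel, shiftFun_zero'] at h2
  rw [show j = -k + i by omega]
  exact h2

lemma mem_of_shift' (k j : ℤ) (hj : j + k = 0) {W : Set (ℤ → A)} {q : ℤ → A}
    (h : shiftFun k q ∈ W) : q ∈ shiftSet j W :=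
  ⟨shiftFun k q, h, by rw [shiftFun_comp, show j + k = 0 from hj, shiftFun_zero']⟩

end Helpers

/-- The group of self-homeomorphisms of a space, under composition
(`(g * h) x = g (h x)`). -/
instance homeomorphGroup {Y : Type*} [TopologicalSpace Y] : Group (Y ≃ₜ Y) where
  mul g h := h.trans g
  one := Homeomorph.refl Y
  inv := Homeomorph.symm
  mul_assoc _ _ _ := Homeomorph.ext fun _ => rfl
  one_mul _ := Homeomorph.ext fun _ => rfl
  mul_one _ := Homeomorph.ext fun _ => rfl
  inv_mul_cancel g := Homeomorph.ext fun y => g.symm_apply_apply y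

/-- Membership in the topological full group of the shift on `X`: `g` admits a continuous
orbit cocycle `f` with `g p = σ^(f p) p`. -/
def InFullGroup {A : Type*} [TopologicalSpace A] (X : Set (ℤ → A)) (g : ↥X ≃ₜ ↥X) : Prop :=
  ∃ f : ↥X → ℤ, Continuous f ∧ ∀ p : ↥X, ((g p : ℤ → A)) = shiftFun (f p) (p : ℤ → A)

/-- `g` is the homeomorphism `f_W`: it acts as `σ` on `W ∪ σ⁻¹(W)`, as `σ⁻²` on `σ(W)`,
and as the identity elsewhere. -/
def IsFOn {A : Type*} [TopologicalSpace A] (X W : Set (ℤ → A)) (g : ↥X ≃ₜ ↥X) : Prop :=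
  ∀ p : ↥X,
    ((p : ℤ → A) ∈ W ∪ shiftSet (-1) W → ((g p : ℤ → A)) = shiftFun 1 (p : ℤ → A)) ∧
    ((p : ℤ → A) ∈ shiftSet 1 W → ((g p : ℤ → A)) = shiftFun (-2) (p : ℤ → A)) ∧
    ((p : ℤ → A) ∉ W ∪ shiftSet (-1) W ∪ shiftSet 1 W → g p = p)

/-- if the five shifts `σ^i(V)`, `−2 ≤ i ≤ 2`, are pairwise disjoint and
`U ⊆ V` is nonempty clopen, then with `τ_V = f_{σ⁻¹(V)} f_{σ(V)}` we have
`τ_V f_U τ_V⁻¹ = f_{σ(U)}` and `τ_V⁻¹ f_U τ_V = f_{σ⁻¹(U)}`. -/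
theorem stmt15 {A : Type*} [Fintype A] [TopologicalSpace A] [DiscreteTopology A]
    (x : ℤ → A) (hUR : UniformlyRecurrent x) (hNP : ¬ PeriodicWord x)
    (X : Set (ℤ → A)) (hX : X = closure (Set.range fun n : ℤ => shiftFun n x))
    (V : Set (ℤ → A)) (hVX : V ⊆ X) (hVne : V.Nonempty)
    (hVclopen : IsClopen (Subtype.val ⁻¹' V : Set ↥X))
    (hdisj : ∀ i j : ℤ, -2 ≤ i → i ≤ 2 → -2 ≤ j → j ≤ 2 → i ≠ j →
      Disjoint (shiftSet i V) (shiftSet j V))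
    (U : Set (ℤ → A)) (hUV : U ⊆ V) (hUne : U.Nonempty)
    (hUclopen : IsClopen (Subtype.val ⁻¹' U : Set ↥X))
    (gU gUp gUm gVp gVm : ↥X ≃ₜ ↥X)
    (hgU : IsFOn X U gU)
    (hgUp : IsFOn X (shiftSet 1 U) gUp) (hgUm : IsFOn X (shiftSet (-1) U) gUm)
    (hgVp : IsFOn X (shiftSet 1 V) gVp) (hgVm : IsFOn X (shiftSet (-1) V) gVm) :
    (gVm * gVp) * gU * (gVm * gVp)⁻¹ = gUp ∧
    (gVm * gVp)⁻¹ * gU * (gVm * gVp) = gUm := by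
  have hV0 : shiftSet 0 V = V := shiftSet_zero V
  have hsub : ∀ i : ℤ, shiftSet i U ⊆ shiftSet i V := fun i => Set.image_mono hUV
  have D : ∀ i j : ℤ, (-2 ≤ i ∧ i ≤ 2 ∧ -2 ≤ j ∧ j ≤ 2 ∧ i ≠ j) → ∀ q : ℤ → A,
      q ∈ shiftSet i V → q ∉ shiftSet j V := by
    rintro i j ⟨a, b, c, d, e⟩ q hq hq'
    exact Set.disjoint_left.mp (hdisj i j a b c d e) hq hq'
  have DV0 : ∀ i : ℤ, (-2 ≤ i ∧ i ≤ 2 ∧ i ≠ 0) → ∀ q : ℤ → A, q ∈ shiftSet i V → q ∉ V := by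
    rintro i ⟨a, b, c⟩ q hq hc
    exact D i 0 ⟨a, b, by norm_num, by norm_num, c⟩ q hq (by rwa [hV0])
  have D0V : ∀ j : ℤ, (-2 ≤ j ∧ j ≤ 2 ∧ j ≠ 0) → ∀ q : ℤ → A, q ∈ V → q ∉ shiftSet j V := by
    rintro j ⟨a, b, c⟩ q hq hc
    exact D 0 j ⟨by norm_num, by norm_num, a, b, fun h => c h.symm⟩ q (by rwa [hV0]) hc
  have eV1 : shiftSet (-1) (shiftSet 1 V) = V := by
    rw [shiftSet_shiftSet, show (1 : ℤ) + -1 = 0 by norm_num, shiftSet_zero]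
  have eV2 : shiftSet 1 (shiftSet 1 V) = shiftSet 2 V := by
    rw [shiftSet_shiftSet]; norm_num
  have eV3 : shiftSet (-1) (shiftSet (-1) V) = shiftSet (-2) V := by
    rw [shiftSet_shiftSet]; norm_num
  have eV4 : shiftSet 1 (shiftSet (-1) V) = V := by
    rw [shiftSet_shiftSet, show (-1 : ℤ) + 1 = 0 by norm_num, shiftSet_zero]
  have eU1 : shiftSet (-1) (shiftSet 1 U) = U := by
    rw [shiftSet_shiftSet, show (1 : ℤ) + -1 = 0 by norm_num, shiftSet_zero]
  have eU2 : shiftSet 1 (shiftSet 1 U) = shiftSet 2 U := by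
    rw [shiftSet_shiftSet]; norm_num
  have eU3 : shiftSet (-1) (shiftSet (-1) U) = shiftSet (-2) U := by
    rw [shiftSet_shiftSet]; norm_num
  have eU4 : shiftSet 1 (shiftSet (-1) U) = U := by
    rw [shiftSet_shiftSet, show (-1 : ℤ) + 1 = 0 by norm_num, shiftSet_zero]
  unfold IsFOn at hgU hgUp hgUm hgVp hgVm
  simp only [eV1, eV2, eV3, eV4, eU1, eU2, eU3, eU4] at hgUp hgUm hgVp hgVm
  -- τ = gVm ∘ gVp acts as shift by 1 on σ⁻²V ∪ σ⁻¹V ∪ V ∪ σV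
  have tauA : ∀ p : ↥X, ((p : ℤ → A) ∈ shiftSet (-2) V ∨ (p : ℤ → A) ∈ shiftSet (-1) V ∨
      (p : ℤ → A) ∈ V ∨ (p : ℤ → A) ∈ shiftSet 1 V) →
      ((gVm (gVp p) : ℤ → A)) = shiftFun 1 (p : ℤ → A) := by
    intro p hp
    rcases hp with h | h | h | h
    · have e1 : gVp p = p := (hgVp p).2.2 (by
        simp only [Set.mem_union, not_or]
        exact ⟨⟨D (-2) 1 (by norm_num) _ h, DV0 (-2) (by norm_num) _ h⟩,
          D (-2) 2 (by norm_num) _ h⟩)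
      have e2 : ((gVm (gVp p) : ℤ → A)) = shiftFun 1 ((gVp p : ℤ → A)) :=
        (hgVm _).1 (by rw [e1]; exact Set.mem_union_right _ h)
      rw [e2, e1]
    · have e1 : gVp p = p := (hgVp p).2.2 (by
        simp only [Set.mem_union, not_or]
        exact ⟨⟨D (-1) 1 (by norm_num) _ h, DV0 (-1) (by norm_num) _ h⟩,
          D (-1) 2 (by norm_num) _ h⟩)
      have e2 : ((gVm (gVp p) : ℤ → A)) = shiftFun 1 ((gVp p : ℤ → A)) :=
        (hgVm _).1 (by rw [e1]; exact Set.mem_union_left _ h)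
      rw [e2, e1]
    · have e1 : ((gVp p : ℤ → A)) = shiftFun 1 (p : ℤ → A) :=
        (hgVp p).1 (Set.mem_union_right _ h)
      have m : shiftFun 1 (p : ℤ → A) ∈ shiftSet 1 V := shift_mem' 1 h
      have e2 : gVm (gVp p) = gVp p := (hgVm _).2.2 (by
        rw [e1]
        simp only [Set.mem_union, not_or]
        exact ⟨⟨D 1 (-1) (by norm_num) _ m, D 1 (-2) (by norm_num) _ m⟩,
          DV0 1 (by norm_num) _ m⟩)
      rw [e2, e1]
    · have e1 : ((gVp p : ℤ → A)) = shiftFun 1 (p : ℤ → A) :=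
        (hgVp p).1 (Set.mem_union_left _ h)
      have m : shiftFun 1 (p : ℤ → A) ∈ shiftSet 2 V := shift_mem 1 2 (by norm_num) h
      have e2 : gVm (gVp p) = gVp p := (hgVm _).2.2 (by
        rw [e1]
        simp only [Set.mem_union, not_or]
        exact ⟨⟨D 2 (-1) (by norm_num) _ m, D 2 (-2) (by norm_num) _ m⟩,
          DV0 2 (by norm_num) _ m⟩)
      rw [e2, e1]
  -- τ acts as shift by -4 on σ²V
  have tauB : ∀ p : ↥X, (p : ℤ → A) ∈ shiftSet 2 V →
      ((gVm (gVp p) : ℤ → A)) = shiftFun (-4) (p : ℤ → A) := by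
    intro p h
    have e1 : ((gVp p : ℤ → A)) = shiftFun (-2) (p : ℤ → A) := (hgVp p).2.1 h
    have m : shiftFun (-2) (p : ℤ → A) ∈ V := shift_mem0 (-2) (by norm_num) h
    have e2 : ((gVm (gVp p) : ℤ → A)) = shiftFun (-2) ((gVp p : ℤ → A)) :=
      (hgVm _).2.1 (by rw [e1]; exact m)
    rw [e2, e1, shiftFun_comp]
    norm_num
  -- τ is the identity off the five shifts of V
  have tauC : ∀ p : ↥X, ((p : ℤ → A) ∉ shiftSet (-2) V ∧ (p : ℤ → A) ∉ shiftSet (-1) V ∧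
      (p : ℤ → A) ∉ V ∧ (p : ℤ → A) ∉ shiftSet 1 V ∧ (p : ℤ → A) ∉ shiftSet 2 V) →
      gVm (gVp p) = p := by
    rintro p ⟨n2, n1, n0, p1, p2⟩
    have e1 : gVp p = p := (hgVp p).2.2 (by
      simp only [Set.mem_union, not_or]; exact ⟨⟨p1, n0⟩, p2⟩)
    have e2 : gVm (gVp p) = gVp p := (hgVm _).2.2 (by
      rw [e1]
      simp only [Set.mem_union, not_or]; exact ⟨⟨n1, n2⟩, n0⟩)
    rw [e2, e1]
  -- first pointwise identity : τ ∘ gU = gUp ∘ τ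
  have h1 : ∀ p : ↥X, ((gVm (gVp (gU p)) : ℤ → A)) = ((gUp (gVm (gVp p)) : ℤ → A)) := by
    intro p
    by_cases h0 : (p : ℤ → A) ∈ V
    · by_cases hu : (p : ℤ → A) ∈ U
      · -- p ∈ U
        have eq1 : ((gU p : ℤ → A)) = shiftFun 1 (p : ℤ → A) :=
          (hgU p).1 (Set.mem_union_left _ hu)
        have eq2 : ((gVm (gVp (gU p)) : ℤ → A)) = shiftFun 1 ((gU p : ℤ → A)) :=
          tauA _ (Or.inr (Or.inr (Or.inr (by rw [eq1]; exact shift_mem' 1 (hUV hu)))))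
        have eq3 : ((gVm (gVp p) : ℤ → A)) = shiftFun 1 (p : ℤ → A) :=
          tauA p (Or.inr (Or.inr (Or.inl h0)))
        have eq4 : ((gUp (gVm (gVp p)) : ℤ → A)) = shiftFun 1 ((gVm (gVp p) : ℤ → A)) :=
          (hgUp _).1 (by rw [eq3]; exact Set.mem_union_left _ (shift_mem' 1 hu))
        rw [eq2, eq1, eq4, eq3]
      · -- p ∈ V \ U
        have eq1 : gU p = p := (hgU p).2.2 (by
          simp only [Set.mem_union, not_or]
          exact ⟨⟨hu, fun hc => D0V (-1) (by norm_num) _ h0 (hsub _ hc)⟩,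
            fun hc => D0V 1 (by norm_num) _ h0 (hsub _ hc)⟩)
        have eq3 : ((gVm (gVp p) : ℤ → A)) = shiftFun 1 (p : ℤ → A) :=
          tauA p (Or.inr (Or.inr (Or.inl h0)))
        have m : shiftFun 1 (p : ℤ → A) ∈ shiftSet 1 V := shift_mem' 1 h0
        have eq4 : gUp (gVm (gVp p)) = gVm (gVp p) := (hgUp _).2.2 (by
          rw [eq3]
          simp only [Set.mem_union, not_or]
          exact ⟨⟨fun hc => hu (mem_of_shift0 1 hc),
            fun hc => DV0 1 (by norm_num) _ m (hUV hc)⟩,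
            fun hc => D 1 2 (by norm_num) _ m (hsub _ hc)⟩)
        rw [eq1, eq4]
    · by_cases hp1 : (p : ℤ → A) ∈ shiftSet 1 V
      · by_cases hu : (p : ℤ → A) ∈ shiftSet 1 U
        · -- p ∈ σU
          have eq1 : ((gU p : ℤ → A)) = shiftFun (-2) (p : ℤ → A) := (hgU p).2.1 hu
          have eq2 : ((gVm (gVp (gU p)) : ℤ → A)) = shiftFun 1 ((gU p : ℤ → A)) :=
            tauA _ (Or.inr (Or.inl (by
              rw [eq1]; exact shift_mem (-2) (-1) (by norm_num) hp1)))
          have eq3 : ((gVm (gVp p) : ℤ → A)) = shiftFun 1 (p : ℤ → A) :=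
            tauA p (Or.inr (Or.inr (Or.inr hp1)))
          have eq4 : ((gUp (gVm (gVp p)) : ℤ → A)) = shiftFun (-2) ((gVm (gVp p) : ℤ → A)) :=
            (hgUp _).2.1 (by rw [eq3]; exact shift_mem 1 2 (by norm_num) hu)
          rw [eq2, eq1, eq4, eq3, shiftFun_comp, shiftFun_comp]
          norm_num
        · -- p ∈ σV \ σU
          have eq1 : gU p = p := (hgU p).2.2 (by
            simp only [Set.mem_union, not_or]
            exact ⟨⟨fun hc => DV0 1 (by norm_num) _ hp1 (hUV hc),
              fun hc => D 1 (-1) (by norm_num) _ hp1 (hsub _ hc)⟩, hu⟩)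
          have eq3 : ((gVm (gVp p) : ℤ → A)) = shiftFun 1 (p : ℤ → A) :=
            tauA p (Or.inr (Or.inr (Or.inr hp1)))
          have m : shiftFun 1 (p : ℤ → A) ∈ shiftSet 2 V := shift_mem 1 2 (by norm_num) hp1
          have eq4 : gUp (gVm (gVp p)) = gVm (gVp p) := (hgUp _).2.2 (by
            rw [eq3]
            simp only [Set.mem_union, not_or]
            exact ⟨⟨fun hc => D 2 1 (by norm_num) _ m (hsub _ hc),
              fun hc => DV0 2 (by norm_num) _ m (hUV hc)⟩,
              fun hc => hu (mem_of_shift (by norm_num : (1 : ℤ) + 1 = 2) hc)⟩)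
          rw [eq1, eq4]
      · by_cases hm1 : (p : ℤ → A) ∈ shiftSet (-1) V
        · by_cases hu : (p : ℤ → A) ∈ shiftSet (-1) U
          · -- p ∈ σ⁻¹U
            have eq1 : ((gU p : ℤ → A)) = shiftFun 1 (p : ℤ → A) :=
              (hgU p).1 (Set.mem_union_right _ hu)
            have mU : shiftFun 1 (p : ℤ → A) ∈ U := shift_mem0 1 (by norm_num) hu
            have eq2 : ((gVm (gVp (gU p)) : ℤ → A)) = shiftFun 1 ((gU p : ℤ → A)) :=
              tauA _ (Or.inr (Or.inr (Or.inl (by rw [eq1]; exact hUV mU))))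
            have eq3 : ((gVm (gVp p) : ℤ → A)) = shiftFun 1 (p : ℤ → A) :=
              tauA p (Or.inr (Or.inl hm1))
            have eq4 : ((gUp (gVm (gVp p)) : ℤ → A)) = shiftFun 1 ((gVm (gVp p) : ℤ → A)) :=
              (hgUp _).1 (by rw [eq3]; exact Set.mem_union_right _ mU)
            rw [eq2, eq1, eq4, eq3]
          · -- p ∈ σ⁻¹V \ σ⁻¹U
            have eq1 : gU p = p := (hgU p).2.2 (by
              simp only [Set.mem_union, not_or]
              exact ⟨⟨fun hc => DV0 (-1) (by norm_num) _ hm1 (hUV hc), hu⟩,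
                fun hc => D (-1) 1 (by norm_num) _ hm1 (hsub _ hc)⟩)
            have eq3 : ((gVm (gVp p) : ℤ → A)) = shiftFun 1 (p : ℤ → A) :=
              tauA p (Or.inr (Or.inl hm1))
            have m : shiftFun 1 (p : ℤ → A) ∈ V := shift_mem0 1 (by norm_num) hm1
            have eq4 : gUp (gVm (gVp p)) = gVm (gVp p) := (hgUp _).2.2 (by
              rw [eq3]
              simp only [Set.mem_union, not_or]
              exact ⟨⟨fun hc => D0V 1 (by norm_num) _ m (hsub _ hc),
                fun hc => hu (mem_of_shift' 1 (-1) (by norm_num) hc)⟩,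
                fun hc => D0V 2 (by norm_num) _ m (hsub _ hc)⟩)
            rw [eq1, eq4]
        · by_cases hp2 : (p : ℤ → A) ∈ shiftSet 2 V
          · -- p ∈ σ²V
            have eq1 : gU p = p := (hgU p).2.2 (by
              simp only [Set.mem_union, not_or]
              exact ⟨⟨fun hc => DV0 2 (by norm_num) _ hp2 (hUV hc),
                fun hc => D 2 (-1) (by norm_num) _ hp2 (hsub _ hc)⟩,
                fun hc => D 2 1 (by norm_num) _ hp2 (hsub _ hc)⟩)
            have eq3 : ((gVm (gVp p) : ℤ → A)) = shiftFun (-4) (p : ℤ → A) := tauB p hp2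
            have m : shiftFun (-4) (p : ℤ → A) ∈ shiftSet (-2) V :=
              shift_mem (-4) (-2) (by norm_num) hp2
            have eq4 : gUp (gVm (gVp p)) = gVm (gVp p) := (hgUp _).2.2 (by
              rw [eq3]
              simp only [Set.mem_union, not_or]
              exact ⟨⟨fun hc => D (-2) 1 (by norm_num) _ m (hsub _ hc),
                fun hc => DV0 (-2) (by norm_num) _ m (hUV hc)⟩,
                fun hc => D (-2) 2 (by norm_num) _ m (hsub _ hc)⟩)
            rw [eq1, eq4]
          · by_cases hm2 : (p : ℤ → A) ∈ shiftSet (-2) V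
            · -- p ∈ σ⁻²V
              have eq1 : gU p = p := (hgU p).2.2 (by
                simp only [Set.mem_union, not_or]
                exact ⟨⟨fun hc => DV0 (-2) (by norm_num) _ hm2 (hUV hc),
                  fun hc => D (-2) (-1) (by norm_num) _ hm2 (hsub _ hc)⟩,
                  fun hc => D (-2) 1 (by norm_num) _ hm2 (hsub _ hc)⟩)
              have eq3 : ((gVm (gVp p) : ℤ → A)) = shiftFun 1 (p : ℤ → A) :=
                tauA p (Or.inl hm2)
              have m : shiftFun 1 (p : ℤ → A) ∈ shiftSet (-1) V :=
                shift_mem 1 (-1) (by norm_num) hm2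
              have eq4 : gUp (gVm (gVp p)) = gVm (gVp p) := (hgUp _).2.2 (by
                rw [eq3]
                simp only [Set.mem_union, not_or]
                exact ⟨⟨fun hc => D (-1) 1 (by norm_num) _ m (hsub _ hc),
                  fun hc => DV0 (-1) (by norm_num) _ m (hUV hc)⟩,
                  fun hc => D (-1) 2 (by norm_num) _ m (hsub _ hc)⟩)
              rw [eq1, eq4]
            · -- p outside the five shifts
              have eq1 : gU p = p := (hgU p).2.2 (by
                simp only [Set.mem_union, not_or]
                exact ⟨⟨fun hc => h0 (hUV hc), fun hc => hm1 (hsub _ hc)⟩,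
                  fun hc => hp1 (hsub _ hc)⟩)
              have eq3 : gVm (gVp p) = p := tauC p ⟨hm2, hm1, h0, hp1, hp2⟩
              have eq4 : gUp p = p := (hgUp p).2.2 (by
                simp only [Set.mem_union, not_or]
                exact ⟨⟨fun hc => hp1 (hsub _ hc), fun hc => h0 (hUV hc)⟩,
                  fun hc => hp2 (hsub _ hc)⟩)
              rw [eq1, eq3, eq4]
  -- second pointwise identity : gU ∘ τ = τ ∘ gUm
  have h2 : ∀ p : ↥X, ((gU (gVm (gVp p)) : ℤ → A)) = ((gVm (gVp (gUm p)) : ℤ → A)) := by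
    intro p
    by_cases h0 : (p : ℤ → A) ∈ V
    · by_cases hu : (p : ℤ → A) ∈ U
      · -- p ∈ U
        have eqr : ((gVm (gVp p) : ℤ → A)) = shiftFun 1 (p : ℤ → A) :=
          tauA p (Or.inr (Or.inr (Or.inl h0)))
        have eqL : ((gU (gVm (gVp p)) : ℤ → A)) = shiftFun (-2) ((gVm (gVp p) : ℤ → A)) :=
          (hgU _).2.1 (by rw [eqr]; exact shift_mem' 1 hu)
        have eq1 : ((gUm p : ℤ → A)) = shiftFun (-2) (p : ℤ → A) := (hgUm p).2.1 hu
        have eq2 : ((gVm (gVp (gUm p)) : ℤ → A)) = shiftFun 1 ((gUm p : ℤ → A)) :=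
          tauA _ (Or.inl (by rw [eq1]; exact shift_mem' (-2) (hUV hu)))
        rw [eqL, eqr, eq2, eq1, shiftFun_comp, shiftFun_comp]
        norm_num
      · -- p ∈ V \ U
        have eqr : ((gVm (gVp p) : ℤ → A)) = shiftFun 1 (p : ℤ → A) :=
          tauA p (Or.inr (Or.inr (Or.inl h0)))
        have m : shiftFun 1 (p : ℤ → A) ∈ shiftSet 1 V := shift_mem' 1 h0
        have eqL : gU (gVm (gVp p)) = gVm (gVp p) := (hgU _).2.2 (by
          rw [eqr]
          simp only [Set.mem_union, not_or]
          exact ⟨⟨fun hc => DV0 1 (by norm_num) _ m (hUV hc),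
            fun hc => D 1 (-1) (by norm_num) _ m (hsub _ hc)⟩,
            fun hc => hu (mem_of_shift0 1 hc)⟩)
        have eq1 : gUm p = p := (hgUm p).2.2 (by
          simp only [Set.mem_union, not_or]
          exact ⟨⟨fun hc => D0V (-1) (by norm_num) _ h0 (hsub _ hc),
            fun hc => D0V (-2) (by norm_num) _ h0 (hsub _ hc)⟩, hu⟩)
        rw [eqL, eq1]
    · by_cases hm1 : (p : ℤ → A) ∈ shiftSet (-1) V
      · by_cases hu : (p : ℤ → A) ∈ shiftSet (-1) U
        · -- p ∈ σ⁻¹U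
          have eqr : ((gVm (gVp p) : ℤ → A)) = shiftFun 1 (p : ℤ → A) :=
            tauA p (Or.inr (Or.inl hm1))
          have mU : shiftFun 1 (p : ℤ → A) ∈ U := shift_mem0 1 (by norm_num) hu
          have eqL : ((gU (gVm (gVp p)) : ℤ → A)) = shiftFun 1 ((gVm (gVp p) : ℤ → A)) :=
            (hgU _).1 (by rw [eqr]; exact Set.mem_union_left _ mU)
          have eq1 : ((gUm p : ℤ → A)) = shiftFun 1 (p : ℤ → A) :=
            (hgUm p).1 (Set.mem_union_left _ hu)
          have eq2 : ((gVm (gVp (gUm p)) : ℤ → A)) = shiftFun 1 ((gUm p : ℤ → A)) :=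
            tauA _ (Or.inr (Or.inr (Or.inl (by rw [eq1]; exact hUV mU))))
          rw [eqL, eqr, eq2, eq1]
        · -- p ∈ σ⁻¹V \ σ⁻¹U
          have eqr : ((gVm (gVp p) : ℤ → A)) = shiftFun 1 (p : ℤ → A) :=
            tauA p (Or.inr (Or.inl hm1))
          have m : shiftFun 1 (p : ℤ → A) ∈ V := shift_mem0 1 (by norm_num) hm1
          have eqL : gU (gVm (gVp p)) = gVm (gVp p) := (hgU _).2.2 (by
            rw [eqr]
            simp only [Set.mem_union, not_or]
            exact ⟨⟨fun hc => hu (mem_of_shift' 1 (-1) (by norm_num) hc),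
              fun hc => D0V (-1) (by norm_num) _ m (hsub _ hc)⟩,
              fun hc => D0V 1 (by norm_num) _ m (hsub _ hc)⟩)
          have eq1 : gUm p = p := (hgUm p).2.2 (by
            simp only [Set.mem_union, not_or]
            exact ⟨⟨hu, fun hc => D (-1) (-2) (by norm_num) _ hm1 (hsub _ hc)⟩,
              fun hc => DV0 (-1) (by norm_num) _ hm1 (hUV hc)⟩)
          rw [eqL, eq1]
      · by_cases hm2 : (p : ℤ → A) ∈ shiftSet (-2) V
        · by_cases hu : (p : ℤ → A) ∈ shiftSet (-2) U
          · -- p ∈ σ⁻²U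
            have eqr : ((gVm (gVp p) : ℤ → A)) = shiftFun 1 (p : ℤ → A) :=
              tauA p (Or.inl hm2)
            have mU : shiftFun 1 (p : ℤ → A) ∈ shiftSet (-1) U :=
              shift_mem 1 (-1) (by norm_num) hu
            have eqL : ((gU (gVm (gVp p)) : ℤ → A)) = shiftFun 1 ((gVm (gVp p) : ℤ → A)) :=
              (hgU _).1 (by rw [eqr]; exact Set.mem_union_right _ mU)
            have eq1 : ((gUm p : ℤ → A)) = shiftFun 1 (p : ℤ → A) :=
              (hgUm p).1 (Set.mem_union_right _ hu)
            have eq2 : ((gVm (gVp (gUm p)) : ℤ → A)) = shiftFun 1 ((gUm p : ℤ → A)) :=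
              tauA _ (Or.inr (Or.inl (by rw [eq1]; exact hsub _ mU)))
            rw [eqL, eqr, eq2, eq1]
          · -- p ∈ σ⁻²V \ σ⁻²U
            have eqr : ((gVm (gVp p) : ℤ → A)) = shiftFun 1 (p : ℤ → A) :=
              tauA p (Or.inl hm2)
            have m : shiftFun 1 (p : ℤ → A) ∈ shiftSet (-1) V :=
              shift_mem 1 (-1) (by norm_num) hm2
            have eqL : gU (gVm (gVp p)) = gVm (gVp p) := (hgU _).2.2 (by
              rw [eqr]
              simp only [Set.mem_union, not_or]
              exact ⟨⟨fun hc => DV0 (-1) (by norm_num) _ m (hUV hc),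
                fun hc => hu (mem_of_shift (by norm_num : (-2 : ℤ) + 1 = -1) hc)⟩,
                fun hc => D (-1) 1 (by norm_num) _ m (hsub _ hc)⟩)
            have eq1 : gUm p = p := (hgUm p).2.2 (by
              simp only [Set.mem_union, not_or]
              exact ⟨⟨fun hc => D (-2) (-1) (by norm_num) _ hm2 (hsub _ hc), hu⟩,
                fun hc => DV0 (-2) (by norm_num) _ hm2 (hUV hc)⟩)
            rw [eqL, eq1]
        · by_cases hp1 : (p : ℤ → A) ∈ shiftSet 1 V
          · -- p ∈ σV
            have eqr : ((gVm (gVp p) : ℤ → A)) = shiftFun 1 (p : ℤ → A) :=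
              tauA p (Or.inr (Or.inr (Or.inr hp1)))
            have m : shiftFun 1 (p : ℤ → A) ∈ shiftSet 2 V := shift_mem 1 2 (by norm_num) hp1
            have eqL : gU (gVm (gVp p)) = gVm (gVp p) := (hgU _).2.2 (by
              rw [eqr]
              simp only [Set.mem_union, not_or]
              exact ⟨⟨fun hc => DV0 2 (by norm_num) _ m (hUV hc),
                fun hc => D 2 (-1) (by norm_num) _ m (hsub _ hc)⟩,
                fun hc => D 2 1 (by norm_num) _ m (hsub _ hc)⟩)
            have eq1 : gUm p = p := (hgUm p).2.2 (by
              simp only [Set.mem_union, not_or]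
              exact ⟨⟨fun hc => D 1 (-1) (by norm_num) _ hp1 (hsub _ hc),
                fun hc => D 1 (-2) (by norm_num) _ hp1 (hsub _ hc)⟩,
                fun hc => DV0 1 (by norm_num) _ hp1 (hUV hc)⟩)
            rw [eqL, eq1]
          · by_cases hp2 : (p : ℤ → A) ∈ shiftSet 2 V
            · -- p ∈ σ²V
              have eqr : ((gVm (gVp p) : ℤ → A)) = shiftFun (-4) (p : ℤ → A) := tauB p hp2
              have m : shiftFun (-4) (p : ℤ → A) ∈ shiftSet (-2) V :=
                shift_mem (-4) (-2) (by norm_num) hp2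
              have eqL : gU (gVm (gVp p)) = gVm (gVp p) := (hgU _).2.2 (by
                rw [eqr]
                simp only [Set.mem_union, not_or]
                exact ⟨⟨fun hc => DV0 (-2) (by norm_num) _ m (hUV hc),
                  fun hc => D (-2) (-1) (by norm_num) _ m (hsub _ hc)⟩,
                  fun hc => D (-2) 1 (by norm_num) _ m (hsub _ hc)⟩)
              have eq1 : gUm p = p := (hgUm p).2.2 (by
                simp only [Set.mem_union, not_or]
                exact ⟨⟨fun hc => D 2 (-1) (by norm_num) _ hp2 (hsub _ hc),
                  fun hc => D 2 (-2) (by norm_num) _ hp2 (hsub _ hc)⟩,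
                  fun hc => DV0 2 (by norm_num) _ hp2 (hUV hc)⟩)
              rw [eqL, eq1]
            · -- p outside the five shifts
              have eq3 : gVm (gVp p) = p := tauC p ⟨hm2, hm1, h0, hp1, hp2⟩
              have eqL : gU (gVm (gVp p)) = gVm (gVp p) := by
                rw [eq3]
                exact (hgU p).2.2 (by
                  simp only [Set.mem_union, not_or]
                  exact ⟨⟨fun hc => h0 (hUV hc), fun hc => hm1 (hsub _ hc)⟩,
                    fun hc => hp1 (hsub _ hc)⟩)
              have eq1 : gUm p = p := (hgUm p).2.2 (by
                simp only [Set.mem_union, not_or]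
                exact ⟨⟨fun hc => hm1 (hsub _ hc), fun hc => hm2 (hsub _ hc)⟩,
                  fun hc => h0 (hUV hc)⟩)
              rw [eqL, eq1]
  have key1 : (gVm * gVp) * gU = gUp * (gVm * gVp) := by
    apply Homeomorph.ext
    intro p
    exact Subtype.ext (h1 p)
  have key2 : gU * (gVm * gVp) = (gVm * gVp) * gUm := by
    apply Homeomorph.ext
    intro p
    exact Subtype.ext (h2 p)
  constructor
  · rw [mul_inv_eq_iff_eq_mul]
    exact key1
  · rw [mul_assoc, key2, inv_mul_cancel_left]
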